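/- Let x̂_Ω : ℂ^m → ℂⁿ for each sampling set Ω, with Ω drawn from a finite distribution, and suppose for every Ω with positive probability, x̂_Ω satisfies the noiseless-limit hypotheses at y_Ω := F_Ω x (differentiability with L² Gateaux control and polynomial growth). Then lim_{σ→0} Var_{Ω,z}[x̂_Ω(F_Ω x + σ S_Ω z)] = Var_Ω[x̂_Ω(F_Ω x)], where z is a standard complex Gaussian on ℂⁿ independent of Ω. -/

import Mathlib

open MeasureTheory ProbabilityTheory Matrix Filter

/-- The standard complex Gaussian measure on `ℂ^m`. -/
noncomputable def stdComplexGaussian (m : ℕ) : Measure (Fin m → ℂ) :=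
  Measure.pi fun _ : Fin m =>
    ((gaussianReal 0 1).prod (gaussianReal 0 1)).map fun p : ℝ × ℝ => (p.1 + p.2 * Complex.I)

/-- The Euclidean (ℓ²) norm of a finitely supported complex vector. -/
noncomputable def l2norm {ι : Type*} [Fintype ι] (v : ι → ℂ) : ℝ :=
  Real.sqrt (∑ i, Complex.normSq (v i))

/-- Radial projection onto the unit sphere of `ℂ^m`. -/
noncomputable def dirSphere (m : ℕ) (z : Fin m → ℂ) : Fin m → ℂ :=
  fun i => z i / (l2norm z : ℂ)

/-- The uniform probability measure on the unit sphere of `ℂ^m`, realized as the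
law of the direction of a standard complex Gaussian vector. -/
noncomputable def uniformSphere (m : ℕ) : Measure (Fin m → ℂ) :=
  (stdComplexGaussian m).map (dirSphere m)

/-! ### Auxiliary lemmas about `l2norm` -/

lemma l2norm_nonneg {ι : Type*} [Fintype ι] (v : ι → ℂ) : 0 ≤ l2norm v :=
  Real.sqrt_nonneg _

lemma l2norm_eq_norm {ι : Type*} [Fintype ι] (v : ι → ℂ) :
    l2norm v = ‖(WithLp.equiv 2 (ι → ℂ)).symm v‖ := by
  rw [EuclideanSpace.norm_eq]
  unfold l2norm
  congr 1
  refine Finset.sum_congr rfl fun i _ => ?_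
  rw [Complex.normSq_eq_norm_sq]
  rfl

lemma abs_apply_le_l2norm {ι : Type*} [Fintype ι] (v : ι → ℂ) (i : ι) :
    ‖v i‖ ≤ l2norm v := by
  rw [Complex.norm_def]
  apply Real.sqrt_le_sqrt
  exact Finset.single_le_sum (fun j _ => Complex.normSq_nonneg (v j)) (Finset.mem_univ i)

lemma l2norm_le_sum {ι : Type*} [Fintype ι] (v : ι → ℂ) :
    l2norm v ≤ ∑ i, ‖v i‖ := by
  have h1 : l2norm v ≤ Real.sqrt ((∑ i, ‖v i‖) ^ 2) := by
    apply Real.sqrt_le_sqrt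
    have := Finset.sum_sq_le_sq_sum_of_nonneg (s := Finset.univ)
      (f := fun i => ‖v i‖) (fun i _ => norm_nonneg _)
    refine le_trans (le_of_eq ?_) this
    refine Finset.sum_congr rfl fun i _ => ?_
    rw [Complex.normSq_eq_norm_sq]
  rwa [Real.sqrt_sq (Finset.sum_nonneg fun i _ => norm_nonneg _)] at h1

lemma l2norm_add_le {ι : Type*} [Fintype ι] (v w : ι → ℂ) :
    l2norm (v + w) ≤ l2norm v + l2norm w := by
  simp only [l2norm_eq_norm]
  have h : (WithLp.equiv 2 (ι → ℂ)).symm (v + w)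
      = (WithLp.equiv 2 (ι → ℂ)).symm v + (WithLp.equiv 2 (ι → ℂ)).symm w := rfl
  rw [h]
  exact norm_add_le _ _

lemma l2norm_smul (c : ℝ) {ι : Type*} [Fintype ι] (v : ι → ℂ) :
    l2norm (c • v) = |c| * l2norm v := by
  simp only [l2norm_eq_norm]
  have h : (WithLp.equiv 2 (ι → ℂ)).symm (c • v) = c • (WithLp.equiv 2 (ι → ℂ)).symm v := rfl
  rw [h, norm_smul, Real.norm_eq_abs]

lemma continuous_l2norm {ι : Type*} [Fintype ι] : Continuous (l2norm (ι := ι)) := by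
  unfold l2norm
  exact Real.continuous_sqrt.comp (continuous_finset_sum _ fun i _ =>
    Complex.continuous_normSq.comp (continuous_apply i))

lemma sup_norm_le_l2norm {ι : Type*} [Fintype ι] (v : ι → ℂ) : ‖v‖ ≤ l2norm v := by
  refine pi_norm_le_iff_of_nonneg (l2norm_nonneg v) |>.2 fun i => ?_
  simpa using abs_apply_le_l2norm v i

lemma one_add_sum_le_prod {ι : Type*} (s : Finset ι) (a : ι → ℝ) (ha : ∀ i, 0 ≤ a i) :
    1 + ∑ i ∈ s, a i ≤ ∏ i ∈ s, (1 + a i) := by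
  classical
  induction s using Finset.induction_on with
  | empty => simp
  | insert x s hx ih =>
    rw [Finset.sum_insert hx, Finset.prod_insert hx]
    have h1 : (1:ℝ) + (a x + ∑ i ∈ s, a i) = (1 + a x) + ∑ i ∈ s, a i := by ring
    rw [h1]
    have h2 : (1 + a x) + ∑ i ∈ s, a i ≤ (1 + a x) * (1 + ∑ i ∈ s, a i) := by
      have hs : 0 ≤ ∑ i ∈ s, a i := Finset.sum_nonneg fun i _ => ha i
      nlinarith [ha x]
    refine h2.trans ?_
    exact mul_le_mul_of_nonneg_left ih (by linarith [ha x])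

/-! ### Gaussian moment lemmas -/

lemma integrable_one_add_abs_pow_gaussian (k : ℕ) :
    Integrable (fun t : ℝ => (1 + |t|) ^ k) (gaussianReal 0 1) := by
  have h1 : gaussianReal 0 1 = volume.withDensity (gaussianPDF 0 1) :=
    gaussianReal_of_var_ne_zero 0 one_ne_zero
  rw [h1]
  rw [integrable_withDensity_iff (measurable_gaussianPDF 0 1)
    (Eventually.of_forall fun x => ENNReal.ofReal_lt_top)]
  have hpdf : ∀ x : ℝ, (gaussianPDF 0 1 x).toReal
      = (Real.sqrt (2 * Real.pi))⁻¹ * Real.exp (-x ^ 2 / 2) := by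
    intro x
    rw [gaussianPDF, ENNReal.toReal_ofReal (gaussianPDFReal_nonneg _ _ _), gaussianPDFReal]
    norm_num
  have hpoly : Integrable (fun x : ℝ => (1 + x ^ 2) ^ k * Real.exp (-x ^ 2 / 2)) volume := by
    have hfun : (fun x : ℝ => (1 + x ^ 2) ^ k * Real.exp (-x ^ 2 / 2))
        = fun x => ∑ j ∈ Finset.range (k + 1),
            (k.choose j : ℝ) * (x ^ (2 * (k - j)) * Real.exp (-x ^ 2 / 2)) := by
      funext x
      rw [add_pow, Finset.sum_mul]
      refine Finset.sum_congr rfl fun j hj => ?_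
      rw [pow_mul]
      ring
    rw [hfun]
    apply integrable_finset_sum
    intro j hj
    apply Integrable.const_mul
    have h := integrable_rpow_mul_exp_neg_mul_sq (b := 2⁻¹) (by norm_num)
      (s := ((2 * (k - j) : ℕ) : ℝ))
      (lt_of_lt_of_le (by norm_num) (Nat.cast_nonneg _))
    simp only [Real.rpow_natCast] at h
    have heq : (fun x : ℝ => x ^ (2 * (k - j)) * Real.exp (-2⁻¹ * x ^ 2))
        = fun x : ℝ => x ^ (2 * (k - j)) * Real.exp (-x ^ 2 / 2) := by
      funext x; congr 1; ring_nf
    rwa [heq] at h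
  have hInt : Integrable (fun x : ℝ => (2:ℝ)^k * (Real.sqrt (2 * Real.pi))⁻¹ *
      ((1 + x ^ 2) ^ k * Real.exp (-x ^ 2 / 2))) volume := hpoly.const_mul _
  apply hInt.mono'
  · apply Continuous.aestronglyMeasurable
    have hc : Continuous fun t : ℝ => (gaussianPDF 0 1 t).toReal := by
      simp only [hpdf]
      continuity
    exact (((continuous_const.add continuous_abs).pow k).mul hc)
  · refine Eventually.of_forall fun x => ?_
    rw [Real.norm_eq_abs, abs_mul, hpdf]
    have h2 : |(1 + |x|) ^ k| = (1 + |x|) ^ k := abs_of_nonneg (by positivity)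
    have h3 : |(Real.sqrt (2 * Real.pi))⁻¹ * Real.exp (-x ^ 2 / 2)|
        = (Real.sqrt (2 * Real.pi))⁻¹ * Real.exp (-x ^ 2 / 2) := abs_of_nonneg (by positivity)
    rw [h2, h3]
    have h4 : (1 + |x|) ^ k ≤ (2 * (1 + x ^ 2)) ^ k := by
      apply pow_le_pow_left₀ (by positivity)
      nlinarith [abs_nonneg x, sq_abs x, sq_nonneg (|x| - 1)]
    calc (1 + |x|) ^ k * ((Real.sqrt (2 * Real.pi))⁻¹ * Real.exp (-x ^ 2 / 2))
        ≤ (2 * (1 + x ^ 2)) ^ k * ((Real.sqrt (2 * Real.pi))⁻¹ * Real.exp (-x ^ 2 / 2)) := by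
          apply mul_le_mul_of_nonneg_right h4 (by positivity)
      _ = 2^k * (Real.sqrt (2 * Real.pi))⁻¹ * ((1 + x ^ 2) ^ k * Real.exp (-x ^ 2 / 2)) := by
          rw [mul_pow]; ring

lemma continuous_cplx : Continuous fun p : ℝ × ℝ => (p.1 + p.2 * Complex.I) :=
  (Complex.continuous_ofReal.comp continuous_fst).add
    ((Complex.continuous_ofReal.comp continuous_snd).mul continuous_const)

lemma isProb_cgauss : IsProbabilityMeasure
    (((gaussianReal 0 1).prod (gaussianReal 0 1)).map fun p : ℝ × ℝ => (p.1 + p.2 * Complex.I)) :=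
  Measure.isProbabilityMeasure_map continuous_cplx.measurable.aemeasurable

lemma isProb_stdComplexGaussian (n : ℕ) : IsProbabilityMeasure (stdComplexGaussian n) := by
  unfold stdComplexGaussian
  haveI := isProb_cgauss
  infer_instance

lemma integrable_one_add_abs_pow_cgauss (k : ℕ) :
    Integrable (fun c : ℂ => (1 + ‖c‖) ^ k)
      (((gaussianReal 0 1).prod (gaussianReal 0 1)).map
        fun p : ℝ × ℝ => (p.1 + p.2 * Complex.I)) := by
  rw [integrable_map_measure
    (show AEStronglyMeasurable (fun c : ℂ => (1 + ‖c‖) ^ k) _ from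
      ((continuous_const.add continuous_norm).pow k).aestronglyMeasurable)
    continuous_cplx.measurable.aemeasurable]
  have hInt : Integrable (fun p : ℝ × ℝ => (1 + |p.1|) ^ k * (1 + |p.2|) ^ k)
      ((gaussianReal 0 1).prod (gaussianReal 0 1)) :=
    (integrable_one_add_abs_pow_gaussian k).mul_prod (integrable_one_add_abs_pow_gaussian k)
  apply hInt.mono'
  · exact (((continuous_const.add continuous_norm).pow k).comp
      continuous_cplx).aestronglyMeasurable
  · refine Eventually.of_forall fun p => ?_
    show ‖(1 + ‖p.1 + p.2 * Complex.I‖) ^ k‖ ≤ _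
    have habs : ‖p.1 + p.2 * Complex.I‖ ≤ |p.1| + |p.2| := by
      refine le_trans (norm_add_le _ _) ?_
      simp
    rw [Real.norm_eq_abs, abs_of_nonneg (pow_nonneg
      (le_trans zero_le_one (le_add_of_nonneg_right (norm_nonneg _))) k)]
    calc (1 + ‖p.1 + p.2 * Complex.I‖) ^ k
        ≤ ((1 + |p.1|) * (1 + |p.2|)) ^ k := by
          apply pow_le_pow_left₀ (by positivity)
          nlinarith [abs_nonneg p.1, abs_nonneg p.2]
      _ = (1 + |p.1|) ^ k * (1 + |p.2|) ^ k := mul_pow _ _ _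

lemma integrable_one_add_l2norm_pow (n k : ℕ) :
    Integrable (fun z : Fin n → ℂ => (1 + l2norm z) ^ k) (stdComplexGaussian n) := by
  letI : MeasureSpace ℂ := ⟨((gaussianReal 0 1).prod (gaussianReal 0 1)).map
    fun p : ℝ × ℝ => (p.1 + p.2 * Complex.I)⟩
  haveI : IsProbabilityMeasure (volume : Measure ℂ) := isProb_cgauss
  have hprod : Integrable (fun z : Fin n → ℂ => ∏ i, (1 + ‖z i‖) ^ k)
      (stdComplexGaussian n) := by
    exact MeasureTheory.Integrable.fintype_prod
      (f := fun (_ : Fin n) (c : ℂ) => (1 + ‖c‖) ^ k)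
      (fun _ => integrable_one_add_abs_pow_cgauss k)
  apply hprod.mono'
  · exact ((continuous_const.add continuous_l2norm).pow k).aestronglyMeasurable
  · refine Eventually.of_forall fun z => ?_
    rw [Real.norm_eq_abs, abs_of_nonneg (pow_nonneg
      (by linarith [l2norm_nonneg z]) k)]
    calc (1 + l2norm z) ^ k ≤ (∏ i, (1 + ‖z i‖)) ^ k := by
          apply pow_le_pow_left₀ (by linarith [l2norm_nonneg z])
          refine le_trans (add_le_add_right (l2norm_le_sum z) 1) ?_
          exact one_add_sum_le_prod _ _ fun i => norm_nonneg _
      _ = ∏ i, (1 + ‖z i‖) ^ k := (Finset.prod_pow _ _ _).symm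

set_option maxHeartbeats 1000000 in
/-- In the zero-noise limit, the total covariance of the reconstruction over both
the (finitely distributed) random sampling set `Ω` and the Gaussian measurement
noise converges to the covariance due to the random sampling set alone:
`lim_{σ→0⁺} Var_{Ω,z}[x̂_Ω(F_Ω x + σ S_Ω z)] = Var_Ω[x̂_Ω(F_Ω x)]`. -/
theorem stmt_17 (n N J : ℕ) (F : Matrix (Fin n) (Fin n) ℂ)
    (hF : F ∈ Matrix.unitaryGroup (Fin n) ℂ)
    (m : Fin J → ℕ)
    (g : ∀ q : Fin J, Fin (m q) → Fin n) (hg : ∀ q, Function.Injective (g q))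
    (S : ∀ q : Fin J, Matrix (Fin (m q)) (Fin n) ℂ)
    (hS : ∀ q i j, S q i j = if j = g q i then 1 else 0)
    (FΩ : ∀ q : Fin J, Matrix (Fin (m q)) (Fin n) ℂ) (hFΩ : ∀ q, FΩ q = S q * F)
    (x : Fin n → ℂ) (y : ∀ q : Fin J, Fin (m q) → ℂ) (hy : ∀ q, y q = (FΩ q).mulVec x)
    (xhat : ∀ q : Fin J, (Fin (m q) → ℂ) → Fin N → ℂ)
    (p : PMF (Fin J))
    (hcont : ∀ q, p q ≠ 0 → Continuous (xhat q))
    (D : ∀ q : Fin J, Matrix (Fin N) (Fin (m q)) ℂ)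
    (hL2 : ∀ q, p q ≠ 0 → Tendsto
      (fun t : ℝ => (t ^ 2)⁻¹ *
        ∫ ω, l2norm (fun i =>
            xhat q (y q + t • ω) i - xhat q (y q) i - t • (D q).mulVec ω i) ^ 2
          ∂(uniformSphere (m q)))
      (nhdsWithin 0 (Set.Ioi 0)) (nhds 0))
    (hgrowth : ∀ q, p q ≠ 0 → ∃ C r α : ℝ, 0 < C ∧ 0 < r ∧ 0 < α ∧
      ∀ w, r < l2norm w → l2norm (xhat q w) ≤ C * l2norm w ^ α)
    (ν : Measure ((Fin J) × (Fin n → ℂ)))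
    (hν : ν = p.toMeasure.prod (stdComplexGaussian n))
    (i j : Fin N) :
    Tendsto (fun σ : ℝ =>
        ∫ q : (Fin J) × (Fin n → ℂ),
          (xhat q.1 (y q.1 + σ • (S q.1).mulVec q.2) i -
              ∫ q', xhat q'.1 (y q'.1 + σ • (S q'.1).mulVec q'.2) i ∂ν) *
            star (xhat q.1 (y q.1 + σ • (S q.1).mulVec q.2) j -
              ∫ q', xhat q'.1 (y q'.1 + σ • (S q'.1).mulVec q'.2) j ∂ν) ∂ν)
      (nhdsWithin 0 (Set.Ioi 0))
      (nhds (∫ q, (xhat q (y q) i - ∫ q', xhat q' (y q') i ∂p.toMeasure) *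
          star (xhat q (y q) j - ∫ q', xhat q' (y q') j ∂p.toMeasure)
          ∂p.toMeasure)) := by
  classical
  subst hν
  haveI hGP : IsProbabilityMeasure (stdComplexGaussian n) := isProb_stdComplexGaussian n
  set G : Measure (Fin n → ℂ) := stdComplexGaussian n with hG
  set P : Measure (Fin J) := p.toMeasure with hP
  set μ : Measure (Fin J × (Fin n → ℂ)) := P.prod G with hμ
  -- almost everywhere, the sampling set has positive probability
  have hae : ∀ᵐ qz ∂μ, p qz.1 ≠ 0 := by
    rw [ae_iff]
    have hsub : {qz : Fin J × (Fin n → ℂ) | ¬ p qz.1 ≠ 0}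
        ⊆ {q | p q = 0} ×ˢ (Set.univ : Set (Fin n → ℂ)) := by
      intro qz h
      simp only [Set.mem_setOf_eq, not_not] at h
      exact ⟨h, Set.mem_univ _⟩
    refine measure_mono_null hsub ?_
    rw [hμ, Measure.prod_prod]
    have h0 : P {q | p q = 0} = 0 := by
      rw [hP, PMF.toMeasure_apply_eq_zero_iff _ MeasurableSet.of_discrete]
      rw [Set.disjoint_left]
      intro a ha hb
      exact ((PMF.mem_support_iff p a).mp ha) hb
    simp [h0]
  -- continuity of the noise-to-data map
  have hcontz : ∀ (q : Fin J) (σ : ℝ),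
      Continuous fun z : Fin n → ℂ => y q + σ • (S q).mulVec z := by
    intro q σ
    have h1 : Continuous fun z : Fin n → ℂ => (S q).mulVec z := by
      have h := LinearMap.continuous_of_finiteDimensional (Matrix.mulVecLin (S q))
      exact h
    exact continuous_const.add (h1.const_smul σ)
  -- a.e.-strong measurability
  have hmeas : ∀ (σ : ℝ) (i' : Fin N), AEStronglyMeasurable
      (fun qz : Fin J × (Fin n → ℂ) => xhat qz.1 (y qz.1 + σ • (S qz.1).mulVec qz.2) i') μ := by
    intro σ i'
    have hm : Measurable fun zq : (Fin n → ℂ) × Fin J =>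
        (if p zq.2 = 0 then 0 else xhat zq.2 (y zq.2 + σ • (S zq.2).mulVec zq.1) i') := by
      apply measurable_from_prod_countable_left
      intro q
      by_cases hq : p q = 0
      · simp only [hq, if_true]
        exact measurable_const
      · simp only [hq, if_false]
        exact ((continuous_apply i').comp ((hcont q hq).comp (hcontz q σ))).measurable
    have hm2 : Measurable fun qz : Fin J × (Fin n → ℂ) =>
        (if p qz.1 = 0 then 0 else xhat qz.1 (y qz.1 + σ • (S qz.1).mulVec qz.2) i') :=
      hm.comp measurable_swap
    refine hm2.aestronglyMeasurable.congr ?_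
    filter_upwards [hae] with qz hq
    simp [hq]
  -- polynomial bound on each reconstruction map
  have hq_bound : ∀ q : Fin J, ∃ (K : ℝ) (k : ℕ), 0 ≤ K ∧ (p q ≠ 0 →
      ∀ (w : Fin (m q) → ℂ) (i' : Fin N),
        ‖xhat q w i'‖ ≤ K * (1 + l2norm w) ^ k) := by
    intro q
    by_cases hq : p q = 0
    · exact ⟨0, 0, le_refl 0, fun h => absurd hq h⟩
    · obtain ⟨C, r, α, hC, hr, hα, hgr⟩ := hgrowth q hq
      obtain ⟨M, hM⟩ := (isCompact_closedBall (0 : Fin (m q) → ℂ) r).exists_bound_of_continuousOn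
        ((hcont q hq).continuousOn)
      have hM0 : 0 ≤ M := le_trans (norm_nonneg _) (hM 0 (Metric.mem_closedBall_self hr.le))
      refine ⟨M + C, ⌈α⌉₊, by linarith, fun _ w i' => ?_⟩
      have h1k : (1:ℝ) ≤ (1 + l2norm w) ^ ⌈α⌉₊ :=
        one_le_pow₀ (by linarith [l2norm_nonneg w])
      by_cases hw : l2norm w ≤ r
      · have hball : w ∈ Metric.closedBall (0 : Fin (m q) → ℂ) r := by
          rw [Metric.mem_closedBall, dist_zero_right]
          exact le_trans (sup_norm_le_l2norm w) hw
        have habs : ‖xhat q w i'‖ ≤ M := by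
          refine le_trans ?_ (hM w hball)
          exact norm_le_pi_norm (xhat q w) i'
        calc ‖xhat q w i'‖ ≤ M * 1 := by linarith
          _ ≤ (M + C) * (1 + l2norm w) ^ ⌈α⌉₊ :=
            mul_le_mul (by linarith) h1k zero_le_one (by linarith)
      · push_neg at hw
        have h2 := hgr w hw
        have h3 : ‖xhat q w i'‖ ≤ l2norm (xhat q w) := abs_apply_le_l2norm _ i'
        have h4 : l2norm w ^ α ≤ (1 + l2norm w) ^ (⌈α⌉₊ : ℕ) := by
          have ha : l2norm w ^ α ≤ (1 + l2norm w) ^ α :=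
            Real.rpow_le_rpow (l2norm_nonneg w) (by linarith) hα.le
          have hb : (1 + l2norm w) ^ α ≤ (1 + l2norm w) ^ ((⌈α⌉₊ : ℕ) : ℝ) :=
            Real.rpow_le_rpow_of_exponent_le (by linarith [l2norm_nonneg w]) (Nat.le_ceil α)
          calc l2norm w ^ α ≤ (1 + l2norm w) ^ ((⌈α⌉₊ : ℕ) : ℝ) := ha.trans hb
            _ = (1 + l2norm w) ^ (⌈α⌉₊ : ℕ) := Real.rpow_natCast _ _
        calc ‖xhat q w i'‖ ≤ C * l2norm w ^ α := h3.trans h2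
          _ ≤ C * (1 + l2norm w) ^ ⌈α⌉₊ := mul_le_mul_of_nonneg_left h4 hC.le
          _ ≤ (M + C) * (1 + l2norm w) ^ ⌈α⌉₊ := by
              apply mul_le_mul_of_nonneg_right (by linarith)
              exact pow_nonneg (by linarith [l2norm_nonneg w]) _
  choose Kf kf hKf0 hKfb using hq_bound
  set k : ℕ := Finset.univ.sup kf with hk
  set K : ℝ := ∑ q, Kf q with hKdef
  have hK0 : 0 ≤ K := Finset.sum_nonneg fun q _ => hKf0 q
  have hKb : ∀ q, p q ≠ 0 → ∀ (w : Fin (m q) → ℂ) (i' : Fin N),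
      ‖xhat q w i'‖ ≤ K * (1 + l2norm w) ^ k := by
    intro q hq w i'
    refine le_trans (hKfb q hq w i') ?_
    have h1 : (1 + l2norm w) ^ kf q ≤ (1 + l2norm w) ^ k :=
      pow_le_pow_right₀ (by linarith [l2norm_nonneg w]) (Finset.le_sup (Finset.mem_univ q))
    have h2 : Kf q ≤ K := Finset.single_le_sum (fun q' _ => hKf0 q') (Finset.mem_univ q)
    exact mul_le_mul h2 h1 (pow_nonneg (by linarith [l2norm_nonneg w]) _) hK0
  -- the sampling matrix does not increase the l2 norm
  have hSz : ∀ (q : Fin J) (z : Fin n → ℂ), l2norm ((S q).mulVec z) ≤ l2norm z := by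
    intro q z
    have hco : ∀ i1, (S q).mulVec z i1 = z (g q i1) := by
      intro i1
      simp only [Matrix.mulVec, dotProduct, hS q]
      simp [Finset.sum_ite_eq]
    unfold l2norm
    apply Real.sqrt_le_sqrt
    calc ∑ i1, Complex.normSq ((S q).mulVec z i1) = ∑ i1, Complex.normSq (z (g q i1)) := by
          simp [hco]
      _ = ∑ j ∈ Finset.univ.image (g q), Complex.normSq (z j) := by
          rw [Finset.sum_image (fun a _ b _ h => hg q h)]
      _ ≤ ∑ j, Complex.normSq (z j) :=
          Finset.sum_le_sum_of_subset_of_nonneg (Finset.subset_univ _)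
            (fun j _ _ => Complex.normSq_nonneg _)
  set A : ℝ := ∑ q, l2norm (y q) with hA
  have hA0 : 0 ≤ A := Finset.sum_nonneg fun q _ => l2norm_nonneg _
  have hyA : ∀ q, l2norm (y q) ≤ A :=
    fun q => Finset.single_le_sum (fun q' _ => l2norm_nonneg _) (Finset.mem_univ q)
  set K' : ℝ := K * (1 + A) ^ k with hK'
  have hK'0 : 0 ≤ K' := mul_nonneg hK0 (pow_nonneg (by linarith) k)
  -- uniform pointwise bound for σ ∈ (0, 1]
  have huB : ∀ σ ∈ Set.Ioc (0:ℝ) 1, ∀ q, p q ≠ 0 → ∀ (z : Fin n → ℂ) (i' : Fin N),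
      ‖xhat q (y q + σ • (S q).mulVec z) i'‖ ≤ K' * (1 + l2norm z) ^ k := by
    intro σ hσ q hq z i'
    have hl : l2norm (y q + σ • (S q).mulVec z) ≤ A + l2norm z := by
      refine le_trans (l2norm_add_le _ _) ?_
      rw [l2norm_smul σ _, abs_of_pos hσ.1]
      have h5 : σ * l2norm ((S q).mulVec z) ≤ 1 * l2norm z :=
        mul_le_mul hσ.2 (hSz q z) (l2norm_nonneg _) zero_le_one
      have := hyA q
      linarith
    refine le_trans (hKb q hq _ i') ?_
    have h6 : (1 + l2norm (y q + σ • (S q).mulVec z)) ^ k ≤ ((1 + A) * (1 + l2norm z)) ^ k := by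
      apply pow_le_pow_left₀ (by linarith [l2norm_nonneg (y q + σ • (S q).mulVec z)])
      nlinarith [l2norm_nonneg z, hA0, hl]
    calc K * (1 + l2norm (y q + σ • (S q).mulVec z)) ^ k
        ≤ K * ((1 + A) * (1 + l2norm z)) ^ k := mul_le_mul_of_nonneg_left h6 hK0
      _ = K' * (1 + l2norm z) ^ k := by rw [hK', mul_pow]; ring
  -- lifting integrability from `G` to the product measure
  have hlift : ∀ h : (Fin n → ℂ) → ℝ, Integrable h G →
      Integrable (fun qz : Fin J × (Fin n → ℂ) => h qz.2) μ := by
    intro h hh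
    have h1 := (integrable_const (c := (1:ℝ)) (μ := P)).mul_prod hh
    simpa using h1
  have hIb : ∀ (c : ℝ) (k' : ℕ),
      Integrable (fun qz : Fin J × (Fin n → ℂ) => c * (1 + l2norm qz.2) ^ k') μ :=
    fun c k' => hlift _ ((integrable_one_add_l2norm_pow n k').const_mul c)
  -- integral over the product of a function of the first coordinate
  have hfst : ∀ φ : Fin J → ℂ, ∫ qz, φ qz.1 ∂μ = ∫ q, φ q ∂P := by
    intro φ
    have h1 := integral_prod_mul (μ := P) (ν := G) (f := φ) (g := fun _ => (1:ℂ))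
    simpa using h1
  -- eventual containment in (0,1]
  have hev : ∀ᶠ σ in nhdsWithin (0:ℝ) (Set.Ioi 0), σ ∈ Set.Ioc (0:ℝ) 1 := by
    have h1 : ∀ᶠ σ in nhdsWithin (0:ℝ) (Set.Ioi 0), σ ∈ Set.Ioi (0:ℝ) :=
      eventually_mem_nhdsWithin
    have h2 : ∀ᶠ σ in nhdsWithin (0:ℝ) (Set.Ioi 0), σ ∈ Set.Iio (1:ℝ) :=
      Eventually.filter_mono nhdsWithin_le_nhds
        (isOpen_Iio.eventually_mem (show (0:ℝ) ∈ Set.Iio 1 by norm_num))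
    filter_upwards [h1, h2] with σ hσ1 hσ2
    exact ⟨hσ1, le_of_lt hσ2⟩
  -- pointwise convergence in σ
  have hptw : ∀ q, p q ≠ 0 → ∀ (z : Fin n → ℂ) (i' : Fin N),
      Tendsto (fun σ : ℝ => xhat q (y q + σ • (S q).mulVec z) i')
        (nhdsWithin 0 (Set.Ioi 0)) (nhds (xhat q (y q) i')) := by
    intro q hq z i'
    have h1 : Continuous fun σ : ℝ => xhat q (y q + σ • (S q).mulVec z) i' := by
      apply (continuous_apply i').comp
      apply (hcont q hq).comp
      exact continuous_const.add (continuous_id.smul continuous_const)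
    have h2 := h1.tendsto 0
    simp only [zero_smul, add_zero] at h2
    exact h2.mono_left nhdsWithin_le_nhds
  -- convergence of the means
  have hMean : ∀ i' : Fin N,
      Tendsto (fun σ : ℝ => ∫ qz : Fin J × (Fin n → ℂ),
          xhat qz.1 (y qz.1 + σ • (S qz.1).mulVec qz.2) i' ∂μ)
        (nhdsWithin 0 (Set.Ioi 0)) (nhds (∫ q, xhat q (y q) i' ∂P)) := by
    intro i'
    have h0 : Tendsto (fun σ : ℝ => ∫ qz : Fin J × (Fin n → ℂ),
          xhat qz.1 (y qz.1 + σ • (S qz.1).mulVec qz.2) i' ∂μ)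
        (nhdsWithin 0 (Set.Ioi 0)) (nhds (∫ qz : Fin J × (Fin n → ℂ), xhat qz.1 (y qz.1) i' ∂μ)) := by
      apply tendsto_integral_filter_of_dominated_convergence
        (fun qz => K' * (1 + l2norm qz.2) ^ k)
      · exact Eventually.of_forall fun σ => hmeas σ i'
      · filter_upwards [hev] with σ hσ
        filter_upwards [hae] with qz hq
        exact huB σ hσ qz.1 hq qz.2 i'
      · exact hIb K' k
      · filter_upwards [hae] with qz hq
        exact hptw qz.1 hq qz.2 i'
    rwa [hfst (fun q => xhat q (y q) i')] at h0
  -- uniform bound on the means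
  have hMB : ∀ (i' : Fin N) (σ : ℝ), σ ∈ Set.Ioc (0:ℝ) 1 →
      ‖∫ qz : Fin J × (Fin n → ℂ), xhat qz.1 (y qz.1 + σ • (S qz.1).mulVec qz.2) i' ∂μ‖
        ≤ ∫ qz : Fin J × (Fin n → ℂ), K' * (1 + l2norm qz.2) ^ k ∂μ := by
    intro i' σ hσ
    refine le_trans (norm_integral_le_integral_norm _) ?_
    apply integral_mono_of_nonneg (Eventually.of_forall fun qz => norm_nonneg _) (hIb K' k)
    filter_upwards [hae] with qz hq
    exact huB σ hσ qz.1 hq qz.2 i'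
  set B : ℝ := ∫ qz : Fin J × (Fin n → ℂ), K' * (1 + l2norm qz.2) ^ k ∂μ with hB
  have hB0 : 0 ≤ B := integral_nonneg fun qz =>
    mul_nonneg hK'0 (pow_nonneg (by linarith [l2norm_nonneg qz.2]) k)
  -- the main dominated convergence argument
  have hmain : Tendsto (fun σ : ℝ =>
        ∫ qz : Fin J × (Fin n → ℂ),
          (xhat qz.1 (y qz.1 + σ • (S qz.1).mulVec qz.2) i -
              ∫ q', xhat q'.1 (y q'.1 + σ • (S q'.1).mulVec q'.2) i ∂μ) *
            star (xhat qz.1 (y qz.1 + σ • (S qz.1).mulVec qz.2) j -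
              ∫ q', xhat q'.1 (y q'.1 + σ • (S q'.1).mulVec q'.2) j ∂μ) ∂μ)
      (nhdsWithin 0 (Set.Ioi 0))
      (nhds (∫ qz : Fin J × (Fin n → ℂ),
          (xhat qz.1 (y qz.1) i - ∫ q, xhat q (y q) i ∂P) *
            star (xhat qz.1 (y qz.1) j - ∫ q, xhat q (y q) j ∂P) ∂μ)) := by
    apply tendsto_integral_filter_of_dominated_convergence
      (fun qz => (K' + B) ^ 2 * ((1 + l2norm qz.2) ^ k) ^ 2)
    · refine Eventually.of_forall fun σ => ?_
      exact ((hmeas σ i).sub aestronglyMeasurable_const).mul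
        (continuous_star.comp_aestronglyMeasurable ((hmeas σ j).sub aestronglyMeasurable_const))
    · filter_upwards [hev] with σ hσ
      filter_upwards [hae] with qz hq
      set a : ℂ := xhat qz.1 (y qz.1 + σ • (S qz.1).mulVec qz.2) i with ha
      set b : ℂ := xhat qz.1 (y qz.1 + σ • (S qz.1).mulVec qz.2) j with hb
      set ci : ℂ := ∫ q', xhat q'.1 (y q'.1 + σ • (S q'.1).mulVec q'.2) i ∂μ with hci
      set cj : ℂ := ∫ q', xhat q'.1 (y q'.1 + σ • (S q'.1).mulVec q'.2) j ∂μ with hcj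
      set t : ℝ := (1 + l2norm qz.2) ^ k with ht
      have h1pos : (0:ℝ) ≤ t := pow_nonneg (by linarith [l2norm_nonneg qz.2]) k
      have h1k : (1:ℝ) ≤ t := one_le_pow₀ (by linarith [l2norm_nonneg qz.2])
      have hbi : ‖a‖ ≤ K' * t := by
        rw [ha]; exact huB σ hσ qz.1 hq qz.2 i
      have hbj : ‖b‖ ≤ K' * t := by
        rw [hb]; exact huB σ hσ qz.1 hq qz.2 j
      have hMi : ‖ci‖ ≤ B := hMB i σ hσ
      have hMj : ‖cj‖ ≤ B := hMB j σ hσ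
      show ‖(a - ci) * star (b - cj)‖ ≤ (K' + B) ^ 2 * t ^ 2
      rw [norm_mul, norm_star]
      have hni : ‖a - ci‖ ≤ (K' + B) * t := by
        refine le_trans (norm_sub_le _ _) ?_
        have hBB : B ≤ B * t := le_mul_of_one_le_right hB0 h1k
        nlinarith
      have hnj : ‖b - cj‖ ≤ (K' + B) * t := by
        refine le_trans (norm_sub_le _ _) ?_
        have hBB : B ≤ B * t := le_mul_of_one_le_right hB0 h1k
        nlinarith
      calc ‖a - ci‖ * ‖b - cj‖ ≤ ((K' + B) * t) * ((K' + B) * t) :=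
            mul_le_mul hni hnj (norm_nonneg _) (mul_nonneg (by linarith) h1pos)
        _ = (K' + B) ^ 2 * t ^ 2 := by ring
    · have heq : (fun qz : Fin J × (Fin n → ℂ) =>
          (K' + B) ^ 2 * ((1 + l2norm qz.2) ^ k) ^ 2)
          = fun qz => (K' + B) ^ 2 * (1 + l2norm qz.2) ^ (k * 2) := by
        funext qz
        rw [← pow_mul]
      rw [heq]
      exact hIb _ _
    · filter_upwards [hae] with qz hq
      have hsj := (continuous_star.tendsto _).comp ((hptw qz.1 hq qz.2 j).sub (hMean j))
      exact ((hptw qz.1 hq qz.2 i).sub (hMean i)).mul hsj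
  -- rewrite the limit as an integral over `P` alone
  have hlim : (∫ qz : Fin J × (Fin n → ℂ),
        (xhat qz.1 (y qz.1) i - ∫ q, xhat q (y q) i ∂P) *
          star (xhat qz.1 (y qz.1) j - ∫ q, xhat q (y q) j ∂P) ∂μ)
      = ∫ q, (xhat q (y q) i - ∫ q', xhat q' (y q') i ∂P) *
          star (xhat q (y q) j - ∫ q', xhat q' (y q') j ∂P) ∂P :=
    hfst (fun q => (xhat q (y q) i - ∫ q', xhat q' (y q') i ∂P) *
      star (xhat q (y q) j - ∫ q', xhat q' (y q') j ∂P))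
  rw [hlim] at hmain
  exact hmain
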